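/- For all complex numbers z1, z2, one has |Im((conj(z2) - conj(z1)) * (z2 * log(|z2|^2) - z1 * log(|z1|^2)))| ≤ 2 * |z1 - z2|^2, where z log(|z|^2) is interpreted as 0 when z = 0. -/

import Mathlib

lemma ch_log_sub_le {a b : ℝ} (ha : 0 < a) (hab : a ≤ b) :
    Real.log b - Real.log a ≤ (b - a) / a := by
  have hb : 0 < b := lt_of_lt_of_le ha hab
  calc Real.log b - Real.log a = Real.log (b / a) := (Real.log_div hb.ne' ha.ne').symm
    _ ≤ b / a - 1 := Real.log_le_sub_one_of_pos (div_pos hb ha)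
    _ = (b - a) / a := by field_simp

/-- The Cazenave–Haraux inequality:
`|Im((conj z2 - conj z1)(z2 log|z2|² - z1 log|z1|²))| ≤ 2|z1 - z2|²`.
The convention `z log|z|² = 0` for `z = 0` is automatic since `Real.log 0 = 0`. -/
theorem cazenave_haraux (z1 z2 : ℂ) :
    |(((starRingEnd ℂ) z2 - (starRingEnd ℂ) z1) *
        (z2 * (Real.log (‖z2‖ ^ 2) : ℂ)
          - z1 * (Real.log (‖z1‖ ^ 2) : ℂ))).im|
      ≤ 2 * ‖z1 - z2‖ ^ 2 := by
  rcases eq_or_ne z1 0 with rfl | h1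
  · simp [Complex.mul_im, Complex.conj_re, Complex.conj_im]
    ring_nf
    simp
  rcases eq_or_ne z2 0 with rfl | h2
  · simp [Complex.mul_im, Complex.conj_re, Complex.conj_im]
    ring_nf
    simp
  set a := ‖z1‖ with ha_def
  set b := ‖z2‖ with hb_def
  set d := ‖z1 - z2‖ with hd_def
  have ha : 0 < a := norm_pos_iff.mpr h1
  have hb : 0 < b := norm_pos_iff.mpr h2
  have hd : 0 ≤ d := norm_nonneg _
  set L1 := Real.log (a ^ 2) with hL1
  set L2 := Real.log (b ^ 2) with hL2
  set m := ((starRingEnd ℂ) z1 * z2).im with hm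
  have him : (((starRingEnd ℂ) z2 - (starRingEnd ℂ) z1) *
        (z2 * (L2 : ℂ) - z1 * (L1 : ℂ))).im = m * (L1 - L2) := by
    simp only [hm, Complex.mul_im, Complex.mul_re, Complex.sub_im, Complex.sub_re,
      Complex.conj_re, Complex.conj_im, Complex.ofReal_im, Complex.ofReal_re]
    ring
  rw [him, abs_mul]
  have hmad : |m| ≤ a * d := by
    have he : m = ((starRingEnd ℂ) z1 * (z2 - z1)).im := by
      simp only [hm, Complex.mul_im, Complex.sub_re, Complex.sub_im,
        Complex.conj_re, Complex.conj_im]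
      ring
    rw [he]
    calc |((starRingEnd ℂ) z1 * (z2 - z1)).im| ≤ ‖(starRingEnd ℂ) z1 * (z2 - z1)‖ :=
        Complex.abs_im_le_norm _
      _ = a * d := by
        rw [norm_mul, Complex.norm_conj, norm_sub_rev z2 z1]
  have hmbd : |m| ≤ b * d := by
    have he : m = (((starRingEnd ℂ) z1 - (starRingEnd ℂ) z2) * z2).im := by
      simp only [hm, Complex.mul_im, Complex.sub_re, Complex.sub_im,
        Complex.conj_re, Complex.conj_im]
      ring
    rw [he]
    calc |(((starRingEnd ℂ) z1 - (starRingEnd ℂ) z2) * z2).im|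
        ≤ ‖((starRingEnd ℂ) z1 - (starRingEnd ℂ) z2) * z2‖ := Complex.abs_im_le_norm _
      _ = b * d := by
        rw [norm_mul, ← map_sub, Complex.norm_conj]
        ring
  have habd : |a - b| ≤ d := by
    have := abs_norm_sub_norm_le z1 z2
    simpa [← ha_def, ← hb_def, ← hd_def] using this
  have hL1e : L1 = 2 * Real.log a := by rw [hL1, sq, Real.log_mul ha.ne' ha.ne']; ring
  have hL2e : L2 = 2 * Real.log b := by rw [hL2, sq, Real.log_mul hb.ne' hb.ne']; ring
  rcases le_total a b with hab | hab
  · have hlog : |L1 - L2| ≤ 2 * (b - a) / a := by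
      rw [hL1e, hL2e, abs_of_nonpos (by nlinarith [Real.log_le_log ha hab])]
      calc -(2 * Real.log a - 2 * Real.log b) = 2 * (Real.log b - Real.log a) := by ring
        _ ≤ 2 * ((b - a) / a) := by linarith [ch_log_sub_le ha hab]
        _ = 2 * (b - a) / a := by ring
    calc |m| * |L1 - L2| ≤ (a * d) * (2 * (b - a) / a) := by
          apply mul_le_mul hmad hlog (abs_nonneg _) (by positivity)
      _ = 2 * d * (b - a) := by field_simp
      _ ≤ 2 * d ^ 2 := by nlinarith [abs_le.mp habd]
  · have hlog : |L1 - L2| ≤ 2 * (a - b) / b := by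
      rw [hL1e, hL2e, abs_of_nonneg (by nlinarith [Real.log_le_log hb hab])]
      calc 2 * Real.log a - 2 * Real.log b = 2 * (Real.log a - Real.log b) := by ring
        _ ≤ 2 * ((a - b) / b) := by linarith [ch_log_sub_le hb hab]
        _ = 2 * (a - b) / b := by ring
    calc |m| * |L1 - L2| ≤ (b * d) * (2 * (a - b) / b) := by
          apply mul_le_mul hmbd hlog (abs_nonneg _) (by positivity)
      _ = 2 * d * (a - b) := by field_simp
      _ ≤ 2 * d ^ 2 := by nlinarith [abs_le.mp habd]
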